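/- In any synchronous F₁-algebra, for every semilattice element α, α* × α* = α*. -/
import Mathlib


open Computability

/-- A synchronous F₁-algebra: an F₁-algebra in the sense of Salomaa
(idempotent semiring, star unfolding, loop tightening, unique fixpoint axiom,
and the empty-word-property map `H`), together with a semilattice `S` of
synchronous atoms and a synchronous product `×` satisfying the synchrony law. -/
class SF1Algebra (A : Type*) extends Add A, Mul A, KStar A, Zero A, One A where
  /-- The designated semilattice of synchronous atoms. -/
  S : Set A
  /-- The synchronous product `×`. -/
  sprod : A → A → A
  /-- The empty-word-property map. -/
  H : A → A
  add_assoc : ∀ e f g : A, e + (f + g) = (e + f) + g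
  add_comm : ∀ e f : A, e + f = f + e
  add_zero : ∀ e : A, e + 0 = e
  add_idem : ∀ e : A, e + e = e
  mul_one : ∀ e : A, e * 1 = e
  one_mul : ∀ e : A, 1 * e = e
  mul_zero : ∀ e : A, e * 0 = 0
  zero_mul : ∀ e : A, 0 * e = 0
  mul_assoc : ∀ e f g : A, e * (f * g) = (e * f) * g
  kstar_unfold_left : ∀ e : A, e∗ = 1 + e * e∗
  kstar_unfold_right : ∀ e : A, e∗ = 1 + e∗ * e
  right_distrib : ∀ e f g : A, (e + f) * g = e * g + f * g
  left_distrib : ∀ e f g : A, e * (f + g) = e * f + e * g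
  /-- Loop tightening: `(e + 1)∗ = e∗`. -/
  loop_tighten : ∀ e : A, (e + 1)∗ = e∗
  /-- The unique fixpoint axiom: if `H f = 0` and `e + f·g = g` then `f∗·e = g`. -/
  unique_fixpoint : ∀ e f g : A, H f = 0 → e + f * g = g → f∗ * e = g
  H_zero : H 0 = 0
  H_one : H 1 = 1
  H_add : ∀ e f : A, H (e + f) = H e + H f
  H_mul : ∀ e f : A, H (e * f) = H e * H f
  H_kstar : ∀ e : A, H (e∗) = (H e)∗
  /-- `S` is closed under the synchronous product. -/
  S_closed : ∀ α ∈ S, ∀ β ∈ S, sprod α β ∈ S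
  /-- `(S, ×)` is a semilattice: `×` is idempotent on `S`. -/
  sprod_idem : ∀ α ∈ S, sprod α α = α
  sprod_assoc : ∀ e f g : A, sprod e (sprod f g) = sprod (sprod e f) g
  sprod_comm : ∀ e f : A, sprod e f = sprod f e
  sprod_distrib : ∀ e f g : A, sprod e (f + g) = sprod e f + sprod e g
  sprod_one : ∀ e : A, sprod e 1 = e
  sprod_zero : ∀ e : A, sprod e 0 = 0
  /-- The synchrony law, for `α, β ∈ S`. -/
  synchrony : ∀ α ∈ S, ∀ β ∈ S, ∀ e f : A,
    sprod (α * e) (β * f) = sprod α β * sprod e f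
  H_sprod : ∀ e f : A, H (sprod e f) = sprod (H e) (H f)
  H_S : ∀ α ∈ S, H α = 0

/-- In any synchronous F₁-algebra, `α∗ × α∗ = α∗` for every semilattice element `α`. -/
theorem sprod_kstar_self {A : Type*} [SF1Algebra A] (α : A)
    (hα : α ∈ SF1Algebra.S (A := A)) :
    SF1Algebra.sprod (α∗) (α∗) = α∗ := by
  have hH := SF1Algebra.H_S α hα
  have hunf : α∗ = 1 + α * α∗ := SF1Algebra.kstar_unfold_left α
  set g := SF1Algebra.sprod (α∗) (α∗) with hg
  -- g = α∗ + α * g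
  have hgeq : α∗ + α * g = g := by
    conv_rhs => rw [hg]
    conv_rhs => rw [hunf]
    rw [SF1Algebra.sprod_distrib, SF1Algebra.sprod_one,
        SF1Algebra.sprod_comm _ (α * α∗), SF1Algebra.sprod_distrib,
        SF1Algebra.sprod_one, SF1Algebra.synchrony α hα α hα,
        SF1Algebra.sprod_idem α hα, ← hg]
    -- goal : α∗ + α * g = (1 + α * α∗) + (α * α∗ + α * g)
    rw [SF1Algebra.add_assoc (1 + α * α∗) (α * α∗) (α * g),
        ← SF1Algebra.add_assoc 1 (α * α∗) (α * α∗),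
        SF1Algebra.add_idem (α * α∗), ← hunf]
  have h1 : α∗ * α∗ = g := SF1Algebra.unique_fixpoint (α∗) α g hH hgeq
  have h2 : α∗ * α∗ = α∗ := by
    refine SF1Algebra.unique_fixpoint (α∗) α (α∗) hH ?_
    nth_rewrite 1 [hunf]
    rw [← SF1Algebra.add_assoc 1 (α * α∗) (α * α∗), SF1Algebra.add_idem (α * α∗), ← hunf]
  rw [← h1, h2]
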